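/- Let F be a field of characteristic not 2. Let α1 = α(t1:u1), α2 = α(t2:u2), α3 = α(t3:u3) be distinct null points, L the join of α1 and α2, and M = (l:m:n) a line with M distinct from the joins α1α3 and α2α3 and such that all denominators below are nonzero. Let a1 be the meet of α1α3 with M and a2 the meet of α2α3 with M. Then q(a1,a2) · S(L,M) = 1, where q is the quadrance between points and S the spread between lines. Explicitly, q(a1,a2) = -(t1u2-t2u1)^2(l^2+m^2-n^2) / ((l(t1^2-u1^2)+2mt1u1-n(t1^2+u1^2))(l(t2^2-u2^2)+2mt2u2-n(t2^2+u2^2))) and S(L,M) is its reciprocal. -/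

import Mathlib

/-- Null subtended quadrance theorem: q(a1,a2) · S(L,M) = 1, with the explicit
    formula for the quadrance. -/
theorem null_subtended_quadrance {F : Type*} [Field F] (hchar : (2 : F) ≠ 0)
    (t1 u1 t2 u2 t3 u3 l m n : F)
    (h12 : t1*u2 - t2*u1 ≠ 0) (h13 : t1*u3 - t3*u1 ≠ 0) (h23 : t2*u3 - t3*u2 ≠ 0)
    (hM : l^2 + m^2 - n^2 ≠ 0)
    -- a1 = meet of the join α1α3 with M (hyperbolic cross product)
    (a11 a12 a13 a21 a22 a23 : F)
    (ha1 : a11 = (t1*u3 + t3*u1)*n - m*(t1*t3 + u1*u3) ∧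
           a12 = (t1*t3 + u1*u3)*l - n*(t1*t3 - u1*u3) ∧
           a13 = l*(t1*u3 + t3*u1) - (t1*t3 - u1*u3)*m)
    -- a2 = meet of the join α2α3 with M
    (ha2 : a21 = (t2*u3 + t3*u2)*n - m*(t2*t3 + u2*u3) ∧
           a22 = (t2*t3 + u2*u3)*l - n*(t2*t3 - u2*u3) ∧
           a23 = l*(t2*u3 + t3*u2) - (t2*t3 - u2*u3)*m)
    -- a1 and a2 are non-null points
    (hnn1 : a11^2 + a12^2 - a13^2 ≠ 0) (hnn2 : a21^2 + a22^2 - a23^2 ≠ 0)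
    -- the denominators of the explicit formula are nonzero
    (hD1 : l*(t1^2 - u1^2) + 2*m*t1*u1 - n*(t1^2 + u1^2) ≠ 0)
    (hD2 : l*(t2^2 - u2^2) + 2*m*t2*u2 - n*(t2^2 + u2^2) ≠ 0)
    (q S : F)
    (hq : q = 1 - (a11*a21 + a12*a22 - a13*a23)^2 /
      ((a11^2 + a12^2 - a13^2) * (a21^2 + a22^2 - a23^2)))
    (hS : S = 1 - ((t1*t2 - u1*u2)*l + (t1*u2 + t2*u1)*m - (t1*t2 + u1*u2)*n)^2 /
      (((t1*t2 - u1*u2)^2 + (t1*u2 + t2*u1)^2 - (t1*t2 + u1*u2)^2) * (l^2 + m^2 - n^2))) :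
    q * S = 1 ∧
    q = -((t1*u2 - t2*u1)^2 * (l^2 + m^2 - n^2)) /
      ((l*(t1^2 - u1^2) + 2*m*t1*u1 - n*(t1^2 + u1^2)) *
       (l*(t2^2 - u2^2) + 2*m*t2*u2 - n*(t2^2 + u2^2))) := by
  obtain ⟨e1, e2, e3⟩ := ha1
  obtain ⟨f1, f2, f3⟩ := ha2
  subst e1 e2 e3 f1 f2 f3
  have key : (t1*t2 - u1*u2)^2 + (t1*u2 + t2*u1)^2 - (t1*t2 + u1*u2)^2
      = (t1*u2 - t2*u1)^2 := by ring
  rw [key] at hS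
  have h12' : (t1*u2 - t2*u1)^2 ≠ 0 := pow_ne_zero 2 h12
  have hq2 : q = -((t1*u2 - t2*u1)^2 * (l^2 + m^2 - n^2)) /
      ((l*(t1^2 - u1^2) + 2*m*t1*u1 - n*(t1^2 + u1^2)) *
       (l*(t2^2 - u2^2) + 2*m*t2*u2 - n*(t2^2 + u2^2))) := by
    rw [hq]
    rw [one_sub_div (mul_ne_zero hnn1 hnn2), div_eq_div_iff (mul_ne_zero hnn1 hnn2) (mul_ne_zero hD1 hD2)]
    ring
  refine ⟨?_, hq2⟩
  rw [hq2, hS]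
  rw [one_sub_div (mul_ne_zero h12' hM), div_mul_div_comm, div_eq_one_iff_eq (mul_ne_zero (mul_ne_zero hD1 hD2) (mul_ne_zero h12' hM))]
  ring
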